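/- Let P(z) = P0 + P1·z + P2·z² with P0, P1, P2 ∈ ℂ^{n×n} be regular (the polynomial p(z) = det P(z) is not identically zero), let α, β, γ, δ ∈ ℂ with αδ − βγ ≠ 0, and define F0 = α²·P0 − αβ·P1 + β²·P2, F1 = −2αγ·P0 + (αδ + βγ)·P1 − 2βδ·P2, F2 = γ²·P0 − γδ·P1 + δ²·P2, and q(y) = det(F0 + F1·y + F2·y²). Then q is not identically zero (F is regular), and for every λ ∈ ℂ with γλ + δ ≠ 0, the multiplicity of λ as a root of p equals the multiplicity of (αλ + β)/(γλ + δ) as a root of q. -/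

import Mathlib

open Matrix Polynomial

/-- The scalar polynomial `det (P0 + P1 z + P2 z²)` of a quadratic matrix polynomial. -/
noncomputable def quadDetPoly {n : ℕ} (P0 P1 P2 : Matrix (Fin n) (Fin n) ℂ) : Polynomial ℂ :=
  Matrix.det (P0.map Polynomial.C + (Polynomial.X : Polynomial ℂ) • P1.map Polynomial.C
    + (Polynomial.X ^ 2 : Polynomial ℂ) • P2.map Polynomial.C)

namespace MoebiusAux

/-- The Möbius transform of a polynomial at homogeneity degree `N`. -/
noncomputable def moeb (a b c d : ℂ) (N : ℕ) (p : Polynomial ℂ) : Polynomial ℂ :=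
  ∑ k ∈ Finset.range (N + 1),
    C (p.coeff k) * (C d * X - C b) ^ k * (C a - C c * X) ^ (N - k)

lemma eval_moeb (a b c d : ℂ) {N : ℕ} {p : Polynomial ℂ} (hp : p.natDegree ≤ N)
    {y : ℂ} (hy : a - c * y ≠ 0) :
    (moeb a b c d N p).eval y
      = (a - c * y) ^ N * p.eval ((d * y - b) / (a - c * y)) := by
  rw [Polynomial.eval_eq_sum_range' (Nat.lt_succ_of_le hp)]
  simp only [moeb, eval_finset_sum, eval_mul, eval_pow, eval_sub, eval_C, eval_X, Finset.mul_sum]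
  refine Finset.sum_congr rfl fun k hk => ?_
  rw [Finset.mem_range, Nat.lt_succ_iff] at hk
  have h2 : (a - c * y) ^ k * (a - c * y) ^ (N - k) = (a - c * y) ^ N :=
    pow_mul_pow_sub _ hk
  rw [div_pow, ← h2]
  linear_combination (-(p.coeff k * (d * y - b) ^ k * (a - c * y) ^ (N - k))) * mul_inv_cancel₀ (pow_ne_zero k hy)

lemma finA (a b c d : ℂ) (hdet : a * d - b * c ≠ 0) :
    ({y : ℂ | a - c * y = 0}).Finite := by
  rcases eq_or_ne c 0 with h | h
  · have ha : a ≠ 0 := by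
      intro h0
      apply hdet
      rw [h, h0]; ring
    convert Set.finite_empty
    ext y
    simp [h, ha, sub_eq_zero]
  · apply Set.Finite.subset (Set.finite_singleton (a / c))
    intro y hy
    simp only [Set.mem_setOf_eq, sub_eq_zero] at hy
    simp only [Set.mem_singleton_iff]
    field_simp
    linear_combination -hy

lemma moeb_mul (a b c d : ℂ) (hdet : a * d - b * c ≠ 0) {N M : ℕ} {p q : Polynomial ℂ}
    (hp : p.natDegree ≤ N) (hq : q.natDegree ≤ M) :
    moeb a b c d (N + M) (p * q) = moeb a b c d N p * moeb a b c d M q := by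
  apply Polynomial.eq_of_infinite_eval_eq
  refine Set.Infinite.mono ?_ ((finA a b c d hdet).infinite_compl)
  intro y hy
  simp only [Set.mem_compl_iff, Set.mem_setOf_eq] at hy
  simp only [Set.mem_setOf_eq]
  rw [eval_mul,
    eval_moeb a b c d (le_trans (natDegree_mul_le) (add_le_add hp hq)) hy,
    eval_moeb a b c d hp hy, eval_moeb a b c d hq hy, eval_mul, pow_add]
  ring

lemma moeb_X_sub_C (a b c d : ℂ) (l : ℂ) :
    moeb a b c d 1 (X - C l) = (C d * X - C b) - C l * (C a - C c * X) := by
  simp [moeb, Finset.sum_range_succ, coeff_sub, coeff_X, coeff_C]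
  ring

lemma moeb_pow (a b c d : ℂ) (hdet : a * d - b * c ≠ 0) (l : ℂ) (m : ℕ) :
    moeb a b c d m ((X - C l) ^ m)
      = ((C d * X - C b) - C l * (C a - C c * X)) ^ m := by
  induction m with
  | zero => simp [moeb]
  | succ k ih =>
    have h1 : ((X - C l : Polynomial ℂ) ^ (k + 1)) = (X - C l) ^ k * (X - C l) :=
      pow_succ _ _
    rw [h1, show k + 1 = k + 1 from rfl]
    rw [moeb_mul a b c d hdet (by simp [natDegree_pow, natDegree_X_sub_C])
      (by simp [natDegree_X_sub_C]), ih, moeb_X_sub_C, pow_succ]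

lemma quadDetPoly_eval {n : ℕ} (M0 M1 M2 : Matrix (Fin n) (Fin n) ℂ) (y : ℂ) :
    (quadDetPoly M0 M1 M2).eval y = Matrix.det (M0 + y • M1 + y ^ 2 • M2) := by
  have h : (quadDetPoly M0 M1 M2).eval y
      = (Polynomial.evalRingHom y) (quadDetPoly M0 M1 M2) := rfl
  rw [h, quadDetPoly, RingHom.map_det]
  congr 1
  ext i j
  simp [Matrix.map_apply, Matrix.add_apply, Matrix.smul_apply, smul_eq_mul]
  ring

lemma quadDetPoly_natDegree_le {n : ℕ} (M0 M1 M2 : Matrix (Fin n) (Fin n) ℂ) :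
    (quadDetPoly M0 M1 M2).natDegree ≤ 2 * n := by
  rw [quadDetPoly, det_apply]
  refine natDegree_sum_le_of_forall_le _ _ fun σ _ => ?_
  have h1 : natDegree (Equiv.Perm.sign σ •
      ∏ i, (M0.map C + (X : Polynomial ℂ) • M1.map C + (X ^ 2 : Polynomial ℂ) • M2.map C) (σ i) i)
      ≤ natDegree (∏ i, (M0.map C + (X : Polynomial ℂ) • M1.map C
        + (X ^ 2 : Polynomial ℂ) • M2.map C) (σ i) i) := by
    rcases Int.units_eq_one_or (Equiv.Perm.sign σ) with sg | sg
    · rw [sg, one_smul]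
    · rw [sg, Units.neg_smul, one_smul, natDegree_neg]
  refine h1.trans ((natDegree_prod_le _ _).trans ?_)
  have h2 : ∀ i : Fin n, natDegree ((M0.map C + (X : Polynomial ℂ) • M1.map C
      + (X ^ 2 : Polynomial ℂ) • M2.map C) (σ i) i) ≤ 2 := by
    intro i
    simp only [Matrix.add_apply, Matrix.smul_apply, Matrix.map_apply, smul_eq_mul]
    compute_degree
  calc ∑ i : Fin n, natDegree ((M0.map C + (X : Polynomial ℂ) • M1.map C
        + (X ^ 2 : Polynomial ℂ) • M2.map C) (σ i) i)
      ≤ ∑ _i : Fin n, 2 := Finset.sum_le_sum fun i _ => h2 i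
    _ = 2 * n := by simp [mul_comm]

end MoebiusAux

open MoebiusAux in
/-- A Möbius transformation maps a regular quadratic matrix polynomial to a regular one, and
the finite eigenvalues `λ` with `γλ + δ ≠ 0` of `P` to eigenvalues `(αλ + β)/(γλ + δ)` of `F`,
preserving multiplicities. -/
theorem moebius_transform_eigenvalues {n : ℕ}
    (P0 P1 P2 : Matrix (Fin n) (Fin n) ℂ)
    (hreg : quadDetPoly P0 P1 P2 ≠ 0)
    (α β γ δ : ℂ) (hdet : α * δ - β * γ ≠ 0)
    (F0 F1 F2 : Matrix (Fin n) (Fin n) ℂ)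
    (hF0 : F0 = (α ^ 2) • P0 - (α * β) • P1 + (β ^ 2) • P2)
    (hF1 : F1 = (-(2 * α * γ)) • P0 + (α * δ + β * γ) • P1 - (2 * β * δ) • P2)
    (hF2 : F2 = (γ ^ 2) • P0 - (γ * δ) • P1 + (δ ^ 2) • P2) :
    quadDetPoly F0 F1 F2 ≠ 0 ∧
      ∀ l : ℂ, γ * l + δ ≠ 0 →
        (quadDetPoly P0 P1 P2).rootMultiplicity l =
          (quadDetPoly F0 F1 F2).rootMultiplicity ((α * l + β) / (γ * l + δ)) := by
  set p := quadDetPoly P0 P1 P2 with hpdef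
  have hdeg : p.natDegree ≤ 2 * n := quadDetPoly_natDegree_le P0 P1 P2
  -- the key identity: the transformed det polynomial is the Möbius transform of p
  have hq : quadDetPoly F0 F1 F2 = moeb α β γ δ (2 * n) p := by
    apply Polynomial.eq_of_infinite_eval_eq
    refine Set.Infinite.mono ?_ ((finA α β γ δ hdet).infinite_compl)
    intro y hy
    simp only [Set.mem_compl_iff, Set.mem_setOf_eq] at hy
    simp only [Set.mem_setOf_eq]
    rw [quadDetPoly_eval, eval_moeb α β γ δ hdeg hy]
    have hmat : F0 + y • F1 + y ^ 2 • F2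
        = ((α - γ * y) ^ 2) • (P0 + ((δ * y - β) / (α - γ * y)) • P1
            + (((δ * y - β) / (α - γ * y)) ^ 2) • P2) := by
      subst hF0 hF1 hF2
      ext i j
      simp only [Matrix.add_apply, Matrix.sub_apply, Matrix.smul_apply, smul_eq_mul]
      linear_combination (-((δ * y - β) * P1 i j * (α - γ * y) + (δ * y - β) ^ 2 * P2 i j * ((α - γ * y) * (α - γ * y)⁻¹ + 1))) * mul_inv_cancel₀ hy
    rw [hmat, Matrix.det_smul, Fintype.card_fin, ← pow_mul, hpdef, quadDetPoly_eval]
  -- key per-eigenvalue fact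
  have key : ∀ l : ℂ, γ * l + δ ≠ 0 →
      quadDetPoly F0 F1 F2 ≠ 0 ∧
        p.rootMultiplicity l =
          (quadDetPoly F0 F1 F2).rootMultiplicity ((α * l + β) / (γ * l + δ)) := by
    intro l hc
    set m := p.rootMultiplicity l with hm
    set μ : ℂ := (α * l + β) / (γ * l + δ) with hμ
    set r := p /ₘ (X - C l) ^ m with hr
    have hfac : (X - C l) ^ m * r = p := p.pow_mul_divByMonic_rootMultiplicity_eq l
    have hrl : r.eval l ≠ 0 := eval_divByMonic_pow_rootMultiplicity_ne_zero l hreg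
    have hr0 : r ≠ 0 := fun h => hrl (by simp [h])
    have hmdeg : m + r.natDegree = p.natDegree := by
      conv_rhs => rw [← hfac]
      rw [natDegree_mul (pow_ne_zero _ (X_sub_C_ne_zero l)) hr0, natDegree_pow,
        natDegree_X_sub_C, mul_one]
    have hm2n : m ≤ 2 * n := le_trans (by omega) hdeg
    have hrdeg : r.natDegree ≤ 2 * n - m := by omega
    have hsplit : 2 * n = m + (2 * n - m) := by omega
    -- factor the transformed polynomial
    have hμc : (γ * l + δ) * μ = α * l + β := by
      rw [hμ, mul_div_cancel₀ _ hc]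
    have hlin : (C δ * X - C β) - C l * (C α - C γ * X)
        = C (γ * l + δ) * (X - C μ) := by
      have h1 : C (γ * l + δ) * C μ = C (α * l + β) := by rw [← C_mul, hμc]
      simp only [map_add, _root_.map_mul] at h1 ⊢
      linear_combination h1
    have hqfac : quadDetPoly F0 F1 F2
        = C ((γ * l + δ) ^ m) * ((X - C μ) ^ m * moeb α β γ δ (2 * n - m) r) := by
      rw [hq]
      conv_lhs => rw [hsplit, ← hfac]
      rw [moeb_mul α β γ δ hdet (by simp [natDegree_pow, natDegree_X_sub_C]) hrdeg,
        moeb_pow α β γ δ hdet, hlin, mul_pow, map_pow, mul_assoc]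
    -- evaluate the residual factor at μ
    have haμ : α - γ * μ = (α * δ - β * γ) / (γ * l + δ) := by
      rw [hμ]; field_simp; ring
    have hane : α - γ * μ ≠ 0 := by
      rw [haμ]; exact div_ne_zero hdet hc
    have hbμ : δ * μ - β = (α * δ - β * γ) * l / (γ * l + δ) := by
      rw [hμ, eq_div_iff hc]; linear_combination (δ * (α * l + β)) * mul_inv_cancel₀ hc
    have hzμ : (δ * μ - β) / (α - γ * μ) = l := by
      rw [div_eq_iff hane, hbμ, haμ]
      field_simp
    have hevalμ : (moeb α β γ δ (2 * n - m) r).eval μ ≠ 0 := by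
      rw [eval_moeb α β γ δ hrdeg hane, hzμ]
      exact mul_ne_zero (pow_ne_zero _ hane) hrl
    have hmoebr0 : moeb α β γ δ (2 * n - m) r ≠ 0 := fun h => hevalμ (by simp [h])
    have hqne : quadDetPoly F0 F1 F2 ≠ 0 := by
      rw [hqfac]
      exact mul_ne_zero (C_ne_zero.mpr (pow_ne_zero _ hc))
        (mul_ne_zero (pow_ne_zero _ (X_sub_C_ne_zero μ)) hmoebr0)
    refine ⟨hqne, ?_⟩
    rw [hqfac, rootMultiplicity_mul (hqfac ▸ hqne), rootMultiplicity_C,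
      rootMultiplicity_mul (mul_ne_zero (pow_ne_zero _ (X_sub_C_ne_zero μ)) hmoebr0),
      rootMultiplicity_X_sub_C_pow,
      rootMultiplicity_eq_zero (fun h => hevalμ h)]
    omega
  obtain ⟨l₀, hl₀⟩ : ∃ l : ℂ, γ * l + δ ≠ 0 := by
    rcases eq_or_ne γ 0 with h | h
    · refine ⟨0, ?_⟩
      simp only [h, zero_mul, zero_add]
      intro hδ
      exact hdet (by rw [hδ, h]; ring)
    · exact ⟨(1 - δ) / γ, by field_simp; simp⟩
  exact ⟨(key l₀ hl₀).1, fun l hl => (key l hl).2⟩
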